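/- Non-invertibility of the Gurtin-Spear rate: let λ₁, λ₂, λ₃ > 0 be pairwise distinct, let b := diag(λ₁², λ₂², λ₃²), and set g_{ij} := (λᵢ² + λⱼ²)/(λⱼ² − λᵢ²) for i ≠ j. Define 𝔸.D := b D + D b + Σ_{i≠j} g_{ij} (λᵢ² − λⱼ²) Eᵢ D Eⱼ on symmetric 3×3 matrices, where Eᵢ is the diagonal matrix projecting onto the i-th coordinate. Then the nonzero symmetric matrix D with D_{12} = D_{21} = 1 and all other entries zero satisfies 𝔸.D = 0; in particular, the linear map D ↦ 𝔸.D on symmetric 3×3 matrices is not injective. -/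

import Mathlib

open Matrix

/-- The linear map `𝔸.D := b D + D b + Σ_{i≠j} g_{ij} (λᵢ² − λⱼ²) Eᵢ D Eⱼ` where
`b = diag(λ₁², λ₂², λ₃²)` and `Eᵢ` projects onto the `i`-th coordinate. -/
noncomputable def Aspec (lam : Fin 3 → ℝ) (g : Fin 3 → Fin 3 → ℝ)
    (D : Matrix (Fin 3) (Fin 3) ℝ) : Matrix (Fin 3) (Fin 3) ℝ :=
  Matrix.diagonal (fun i => (lam i) ^ 2) * D + D * Matrix.diagonal (fun i => (lam i) ^ 2)
    + ∑ i : Fin 3, ∑ j : Fin 3,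
        if i ≠ j then
          (g i j * ((lam i) ^ 2 - (lam j) ^ 2)) •
            (Matrix.single i i (1 : ℝ) * D * Matrix.single j j (1 : ℝ))
        else 0

/-- Non-invertibility of the Gurtin-Spear rate: with pairwise distinct
`λ₁, λ₂, λ₃ > 0` and `g_{ij} = (λᵢ² + λⱼ²)/(λⱼ² − λᵢ²)`, the nonzero symmetric matrix `D`
with `D₁₂ = D₂₁ = 1` and all other entries zero lies in the kernel of `𝔸`; in particular
`𝔸` is not injective on symmetric matrices. -/
theorem gurtin_spear_not_injective
    (l₁ l₂ l₃ : ℝ) (h₁ : 0 < l₁) (h₂ : 0 < l₂) (h₃ : 0 < l₃)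
    (h₁₂ : l₁ ≠ l₂) (h₁₃ : l₁ ≠ l₃) (h₂₃ : l₂ ≠ l₃) :
    (Matrix.single (0 : Fin 3) (1 : Fin 3) (1 : ℝ)
        + Matrix.single (1 : Fin 3) (0 : Fin 3) (1 : ℝ)) ≠ 0
    ∧ (Matrix.single (0 : Fin 3) (1 : Fin 3) (1 : ℝ)
        + Matrix.single (1 : Fin 3) (0 : Fin 3) (1 : ℝ))ᵀ
      = Matrix.single (0 : Fin 3) (1 : Fin 3) (1 : ℝ)
        + Matrix.single (1 : Fin 3) (0 : Fin 3) (1 : ℝ)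
    ∧ Aspec ![l₁, l₂, l₃]
        (fun i j => ((![l₁, l₂, l₃] i) ^ 2 + (![l₁, l₂, l₃] j) ^ 2)
          / ((![l₁, l₂, l₃] j) ^ 2 - (![l₁, l₂, l₃] i) ^ 2))
        (Matrix.single (0 : Fin 3) (1 : Fin 3) (1 : ℝ)
          + Matrix.single (1 : Fin 3) (0 : Fin 3) (1 : ℝ)) = 0
    ∧ ¬ Set.InjOn
        (Aspec ![l₁, l₂, l₃]
          (fun i j => ((![l₁, l₂, l₃] i) ^ 2 + (![l₁, l₂, l₃] j) ^ 2)
            / ((![l₁, l₂, l₃] j) ^ 2 - (![l₁, l₂, l₃] i) ^ 2)))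
        {D : Matrix (Fin 3) (Fin 3) ℝ | Dᵀ = D} := by
  have hne : (Matrix.single (0 : Fin 3) (1 : Fin 3) (1 : ℝ)
      + Matrix.single (1 : Fin 3) (0 : Fin 3) (1 : ℝ)) ≠ 0 := by
    intro h
    have := congrFun (congrFun h 0) 1
    simp [Matrix.single] at this
  have hsym : (Matrix.single (0 : Fin 3) (1 : Fin 3) (1 : ℝ)
      + Matrix.single (1 : Fin 3) (0 : Fin 3) (1 : ℝ))ᵀ
      = Matrix.single (0 : Fin 3) (1 : Fin 3) (1 : ℝ)
      + Matrix.single (1 : Fin 3) (0 : Fin 3) (1 : ℝ) := by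
    ext i j
    fin_cases i <;> fin_cases j <;>
      simp [Matrix.single, Matrix.transpose_apply]
  have hs : l₂ ^ 2 - l₁ ^ 2 ≠ 0 := by
    intro h
    exact h₁₂ (by nlinarith [sq_nonneg (l₁ - l₂), sq_nonneg (l₁ + l₂)] : l₁ = l₂)
  have hs' : l₁ ^ 2 - l₂ ^ 2 ≠ 0 := fun h => hs (by linarith)
  have hker : Aspec ![l₁, l₂, l₃]
      (fun i j => ((![l₁, l₂, l₃] i) ^ 2 + (![l₁, l₂, l₃] j) ^ 2)
        / ((![l₁, l₂, l₃] j) ^ 2 - (![l₁, l₂, l₃] i) ^ 2))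
      (Matrix.single (0 : Fin 3) (1 : Fin 3) (1 : ℝ)
        + Matrix.single (1 : Fin 3) (0 : Fin 3) (1 : ℝ)) = 0 := by
    ext i j
    fin_cases i <;> fin_cases j <;>
      simp [Aspec, Matrix.mul_apply, Fin.sum_univ_three, Matrix.single,
        Matrix.diagonal] <;> field_simp <;> ring
  have hzero : Aspec ![l₁, l₂, l₃]
      (fun i j => ((![l₁, l₂, l₃] i) ^ 2 + (![l₁, l₂, l₃] j) ^ 2)
        / ((![l₁, l₂, l₃] j) ^ 2 - (![l₁, l₂, l₃] i) ^ 2)) 0 = 0 := by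
    simp [Aspec]
  refine ⟨hne, hsym, hker, fun hInj => ?_⟩
  exact hne (hInj (Set.mem_setOf_eq ▸ hsym) (by simp) (by rw [hker, hzero]))
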